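/- For a bimodal switched system with diagonalizable Schur stable matrices $A_1 = V_1 D_1 V_1^{-1}$, $A_2 = V_2 D_2 V_2^{-1}$ with spectral radii $\rho_1, \rho_2 < 1$: if $\tau > \frac{\ln \rho(|V_2^{-1}V_1| \, |V_1^{-1}V_2|)}{-\ln(\rho_1 \rho_2)}$, then the switched system $x(t+1) = A_{\sigma(t)}x(t)$ is asymptotically stable for all switching signals with dwell times $t_k - t_{k-1} \ge \tau$. -/

import Mathlib

open Filter Matrix
open scoped NNReal ENNReal

namespace BMDT

variable {N : ℕ}

noncomputable def ab (M : Matrix (Fin N) (Fin N) ℂ) : Matrix (Fin N) (Fin N) ℝ :=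
  Matrix.of fun i j => ‖M i j‖

lemma ab_nonneg (M : Matrix (Fin N) (Fin N) ℂ) (i j : Fin N) : 0 ≤ ab M i j :=
  norm_nonneg (M i j)

noncomputable def E (M : Matrix (Fin N) (Fin N) ℝ) : ℝ := ∑ i, ∑ j, |M i j|

lemma E_nonneg (M : Matrix (Fin N) (Fin N) ℝ) : 0 ≤ E M :=
  Finset.sum_nonneg fun _ _ => Finset.sum_nonneg fun _ _ => abs_nonneg _

lemma entry_le_E (M : Matrix (Fin N) (Fin N) ℝ) (i j : Fin N) : |M i j| ≤ E M := by
  calc |M i j| ≤ ∑ l, |M i l| :=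
        Finset.single_le_sum (fun l _ => abs_nonneg (M i l)) (Finset.mem_univ j)
    _ ≤ E M :=
        Finset.single_le_sum (f := fun i' => ∑ l, |M i' l|)
          (fun i' _ => Finset.sum_nonneg fun l _ => abs_nonneg _) (Finset.mem_univ i)

lemma E_submul (M P : Matrix (Fin N) (Fin N) ℝ) : E (M * P) ≤ E M * E P := by
  unfold E
  calc ∑ i, ∑ j, |(M * P) i j| ≤ ∑ i, ∑ j, ∑ k, |M i k| * |P k j| := by
        refine Finset.sum_le_sum fun i _ => Finset.sum_le_sum fun j _ => ?_
        rw [Matrix.mul_apply]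
        refine (Finset.abs_sum_le_sum_abs _ _).trans ?_
        exact Finset.sum_le_sum fun k _ => le_of_eq (abs_mul _ _)
    _ ≤ (∑ i, ∑ k, |M i k|) * (∑ k, ∑ j, |P k j|) := by
        rw [Finset.sum_mul]
        refine Finset.sum_le_sum fun i _ => ?_
        rw [Finset.sum_comm]
        calc ∑ k, ∑ j, |M i k| * |P k j| = ∑ k, |M i k| * ∑ j, |P k j| := by
              simp [Finset.mul_sum]
          _ ≤ ∑ k, |M i k| * ((∑ k', ∑ j, |P k' j|)) := by
              refine Finset.sum_le_sum fun k _ => ?_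
              refine mul_le_mul_of_nonneg_left ?_ (abs_nonneg _)
              exact Finset.single_le_sum (f := fun k' => ∑ j, |P k' j|)
                (fun k' _ => Finset.sum_nonneg fun j _ => abs_nonneg _) (Finset.mem_univ k)
          _ = (∑ k, |M i k|) * (∑ k', ∑ j, |P k' j|) := by rw [Finset.sum_mul]

lemma abs_mulVec_le_E (M : Matrix (Fin N) (Fin N) ℝ) (v : Fin N → ℝ) (i : Fin N) :
    |(M.mulVec v) i| ≤ E M * ∑ l, |v l| := by
  rw [Matrix.mulVec, dotProduct]
  refine (Finset.abs_sum_le_sum_abs _ _).trans ?_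
  rw [Finset.mul_sum]
  refine Finset.sum_le_sum fun l _ => ?_
  rw [abs_mul]
  exact mul_le_mul_of_nonneg_right (entry_le_E M i l) (abs_nonneg _)

lemma ab_mul_le (M P : Matrix (Fin N) (Fin N) ℂ) (i j : Fin N) :
    ab (M * P) i j ≤ (ab M * ab P) i j := by
  show ‖(M * P) i j‖ ≤ _
  rw [Matrix.mul_apply, Matrix.mul_apply]
  refine (norm_sum_le _ _).trans (le_of_eq ?_)
  refine Finset.sum_congr rfl fun k _ => ?_
  exact norm_mul _ _

lemma abs_mulVec_le (M : Matrix (Fin N) (Fin N) ℂ) (v : Fin N → ℂ) (i : Fin N) :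
    ‖M.mulVec v i‖ ≤ (ab M).mulVec (fun l => ‖v l‖) i := by
  rw [Matrix.mulVec, Matrix.mulVec, dotProduct, dotProduct]
  refine (norm_sum_le _ _).trans (le_of_eq ?_)
  exact Finset.sum_congr rfl fun k _ => norm_mul _ _

lemma mulVec_mono {M : Matrix (Fin N) (Fin N) ℝ} (hM : ∀ i j, 0 ≤ M i j)
    {v w : Fin N → ℝ} (hvw : ∀ i, v i ≤ w i) (i : Fin N) :
    M.mulVec v i ≤ M.mulVec w i := by
  rw [Matrix.mulVec, Matrix.mulVec, dotProduct, dotProduct]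
  exact Finset.sum_le_sum fun l _ => mul_le_mul_of_nonneg_left (hvw l) (hM i l)

lemma E_mono {M P : Matrix (Fin N) (Fin N) ℝ} (h : ∀ i j, |M i j| ≤ P i j) : E M ≤ E P := by
  refine Finset.sum_le_sum fun i _ => Finset.sum_le_sum fun j _ => ?_
  exact (h i j).trans (le_abs_self _)



section Gelfand

attribute [local instance] Matrix.linftyOpNormedRing Matrix.linftyOpNormedAlgebra

noncomputable instance : CompleteSpace (Matrix (Fin N) (Fin N) ℂ) :=
  inferInstance

lemma linfty_entry_le (M : Matrix (Fin N) (Fin N) ℂ) (i j : Fin N) :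
    ‖M i j‖ ≤ ‖M‖ := by
  rw [Matrix.linfty_opNorm_def]
  have h1 : ‖M i j‖₊ ≤ ∑ l, ‖M i l‖₊ :=
    Finset.single_le_sum (f := fun l => ‖M i l‖₊) (fun l _ => zero_le) (Finset.mem_univ j)
  have h2 : (∑ l, ‖M i l‖₊) ≤ (Finset.univ : Finset (Fin N)).sup fun i' => ∑ l, ‖M i' l‖₊ :=
    Finset.le_sup (f := fun i' => ∑ l, ‖M i' l‖₊) (Finset.mem_univ i)
  calc ‖M i j‖ = (‖M i j‖₊ : ℝ) := rfl
    _ ≤ _ := by exact_mod_cast h1.trans h2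

lemma eventually_entry_pow_le [Nonempty (Fin N)] (B : Matrix (Fin N) (Fin N) ℂ) {r : ℝ}
    (hr : (spectralRadius ℂ B).toReal < r) :
    ∀ᶠ j : ℕ in atTop, ∀ i l, ‖(B ^ j) i l‖ ≤ r ^ j := by
  have hfin : spectralRadius ℂ B ≠ ⊤ :=
    ne_top_of_le_ne_top ENNReal.coe_ne_top (spectrum.spectralRadius_le_nnnorm (𝕜 := ℂ) B)
  have hlt : spectralRadius ℂ B < ENNReal.ofReal r :=
    (ENNReal.lt_ofReal_iff_toReal_lt hfin).mpr hr
  have hr0 : 0 < r := lt_of_le_of_lt ENNReal.toReal_nonneg hr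
  have hG := spectrum.pow_nnnorm_pow_one_div_tendsto_nhds_spectralRadius B
  have hev : ∀ᶠ j : ℕ in atTop,
      ((‖B ^ j‖₊ : ℝ≥0∞) ^ (1 / (j : ℝ))) < ENNReal.ofReal r :=
    hG.eventually_lt_const hlt
  filter_upwards [hev, eventually_ge_atTop 1] with j hj hj1 i l
  have hjne : (j : ℝ) ≠ 0 := by positivity
  have hpow : ((‖B ^ j‖₊ : ℝ≥0∞) ^ (1 / (j : ℝ))) ^ (j : ℝ) <
      (ENNReal.ofReal r) ^ (j : ℝ) :=
    ENNReal.rpow_lt_rpow hj (by positivity)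
  rw [← ENNReal.rpow_mul, one_div_mul_cancel hjne, ENNReal.rpow_one] at hpow
  have hofr : (ENNReal.ofReal r) ^ (j : ℝ) = ENNReal.ofReal (r ^ j) := by
    rw [ENNReal.ofReal_rpow_of_pos hr0, Real.rpow_natCast]
  rw [hofr] at hpow
  have : ‖B ^ j‖ < r ^ j := by
    have := (ENNReal.lt_ofReal_iff_toReal_lt ENNReal.coe_ne_top).mp hpow
    simpa using this
  exact (linfty_entry_le _ i l).trans this.le

end Gelfand


lemma matrix_map_pow (M : Matrix (Fin N) (Fin N) ℝ) (f : ℝ →+* ℂ) (p : ℕ) :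
    (M ^ p).map f = (M.map f) ^ p := by
  induction p with
  | zero => simp [Matrix.map_one]
  | succ p ih => rw [pow_succ, Matrix.map_mul, ih, pow_succ]

lemma mul_pow_shift {α : Type*} [Monoid α] (u v : α) (n : ℕ) :
    (u * v) ^ (n + 1) = u * (v * u) ^ n * v := by
  induction n with
  | zero => simp
  | succ n ih =>
    rw [pow_succ, ih, pow_succ]
    simp [mul_assoc]

lemma pow_decomp (Ar : Matrix (Fin N) (Fin N) ℝ) (Vc Dc : Matrix (Fin N) (Fin N) ℂ)
    (hV : IsUnit Vc) (h : Ar.map Complex.ofReal = Vc * Dc * Vc⁻¹) (p : ℕ) :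
    (Ar.map Complex.ofReal) ^ p = Vc * Dc ^ p * Vc⁻¹ := by
  have hdet : IsUnit Vc.det := (Matrix.isUnit_iff_isUnit_det Vc).mp hV
  induction p with
  | zero => simp [Matrix.mul_nonsing_inv Vc hdet]
  | succ p ih =>
    rw [pow_succ, ih, h, pow_succ]
    simp only [Matrix.mul_assoc]
    rw [← Matrix.mul_assoc Vc⁻¹ Vc, Matrix.nonsing_inv_mul Vc hdet, Matrix.one_mul]

lemma cplx_mulVec_E (M : Matrix (Fin N) (Fin N) ℂ) (v : Fin N → ℂ) (i : Fin N) :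
    ‖M.mulVec v i‖ ≤ E (ab M) * ∑ l, ‖v l‖ := by
  refine (abs_mulVec_le M v i).trans (le_trans (le_abs_self _) ?_)
  refine (abs_mulVec_le_E (ab M) _ i).trans ?_
  refine mul_le_mul_of_nonneg_left ?_ (E_nonneg _)
  exact le_of_eq (Finset.sum_congr rfl fun l _ => abs_of_nonneg (norm_nonneg _))

lemma E_ab_mul_le (M P : Matrix (Fin N) (Fin N) ℂ) : E (ab (M * P)) ≤ E (ab M) * E (ab P) := by
  refine le_trans (E_mono fun i j => ?_) (E_submul _ _)
  rw [abs_of_nonneg (ab_nonneg _ i j)]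
  exact ab_mul_le M P i j

lemma mul_entry_nonneg {M P : Matrix (Fin N) (Fin N) ℝ} (hM : ∀ i j, 0 ≤ M i j)
    (hP : ∀ i j, 0 ≤ P i j) (i j : Fin N) : 0 ≤ (M * P) i j := by
  rw [Matrix.mul_apply]; exact Finset.sum_nonneg fun k _ => mul_nonneg (hM i k) (hP k j)

lemma pow_entry_nonneg {M : Matrix (Fin N) (Fin N) ℝ} (hM : ∀ i j, 0 ≤ M i j) (p : ℕ) :
    ∀ i j, 0 ≤ (M ^ p) i j := by
  induction p with
  | zero => intro i j; rw [pow_zero, Matrix.one_apply]; split <;> norm_num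
  | succ p ih => intro i j; rw [pow_succ]; exact mul_entry_nonneg ih hM i j

lemma mulVec_nonneg {M : Matrix (Fin N) (Fin N) ℝ} (hM : ∀ i j, 0 ≤ M i j) {v : Fin N → ℝ}
    (hv : ∀ l, 0 ≤ v l) (i : Fin N) : 0 ≤ M.mulVec v i := by
  rw [Matrix.mulVec, dotProduct]
  exact Finset.sum_nonneg fun l _ => mul_nonneg (hM i l) (hv l)

lemma mulVec_const_mul (M : Matrix (Fin N) (Fin N) ℝ) (c : ℝ) (w : Fin N → ℝ) (i : Fin N) :
    M.mulVec (fun l => c * w l) i = c * M.mulVec w i := by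
  simp only [Matrix.mulVec, dotProduct, Finset.mul_sum]
  exact Finset.sum_congr rfl fun l _ => by ring

end BMDT

/-- The entrywise absolute value of a complex matrix, viewed again as a complex matrix. -/
noncomputable def absMatrix {n : Type*} (A : Matrix n n ℂ) : Matrix n n ℂ :=
  Matrix.of fun i j => ((‖A i j‖ : ℝ) : ℂ)

/- Bimodal minimum dwell time corollary (via Bauer's theorem).  For a bimodal switched
system with diagonalizable Schur stable matrices `Aᵢ = Vᵢ Dᵢ Vᵢ⁻¹` and spectral radii
`ρ₁, ρ₂ ∈ (0,1)`: if `τ > ln ρ(|V₂⁻¹V₁| |V₁⁻¹V₂|) / (-ln (ρ₁ρ₂))`, then every solution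
with alternating switching and all switching intervals at least `τ` converges to zero. -/
set_option maxHeartbeats 1600000 in
/-- Bimodal minimum dwell time corollary (via Bauer's theorem).  For a bimodal switched
system with diagonalizable Schur stable matrices `Aᵢ = Vᵢ Dᵢ Vᵢ⁻¹` and spectral radii
`ρ₁, ρ₂ ∈ (0,1)`: if `τ > ln ρ(|V₂⁻¹V₁| |V₁⁻¹V₂|) / (-ln (ρ₁ρ₂))`, then every solution
with alternating switching and all switching intervals at least `τ` converges to zero. -/
theorem bimodal_min_dwell_time_scaled
    {N : ℕ} (A : Fin 2 → Matrix (Fin N) (Fin N) ℝ)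
    (V D : Fin 2 → Matrix (Fin N) (Fin N) ℂ) (ρ : Fin 2 → ℝ)
    (hVunit : ∀ i, IsUnit (V i))
    (hDdiag : ∀ i, (D i).IsDiag)
    (hdecomp : ∀ i, (A i).map Complex.ofReal = V i * D i * (V i)⁻¹)
    (hρ : ∀ i, ρ i = ⨆ j, ‖D i j j‖)
    (hρpos : ∀ i, 0 < ρ i) (hSchur : ∀ i, ρ i < 1)
    (τ : ℝ)
    (hτ : Real.log (spectralRadius ℂ
            (absMatrix ((V 1)⁻¹ * V 0) * absMatrix ((V 0)⁻¹ * V 1))).toReal /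
          (-Real.log (ρ 0 * ρ 1)) < τ)
    (s : ℕ → Fin 2) (t : ℕ → ℕ)
    (ht0 : t 0 = 0) (htmono : StrictMono t)
    (hdwell : ∀ k, τ ≤ ((t (k + 1) - t k : ℕ) : ℝ))
    (halt : ∀ k, s (k + 1) ≠ s (k + 2))
    (σ : ℕ → Fin 2)
    (hσ : ∀ k u, t k ≤ u → u < t (k + 1) → σ u = s (k + 1))
    (x : ℕ → Fin N → ℝ)
    (hx : ∀ u, x (u + 1) = (A (σ u)).mulVec (x u)) :
    Filter.Tendsto x Filter.atTop (nhds 0) := by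
  classical
  open Filter Matrix BMDT in
  rcases Nat.eq_zero_or_pos N with hN | hN
  · have hx0 : x = fun _ => 0 := by
      funext u i; exact absurd i.isLt (by omega)
    rw [hx0]; exact tendsto_const_nhds
  haveI : Nonempty (Fin N) := ⟨⟨0, hN⟩⟩
  -- mode sequence
  set b : ℕ → Fin 2 := fun k => s (k + 1) with hbdef
  have hbne : ∀ k, b (k + 1) ≠ b k := fun k => (halt k).symm
  have hfin2 : ∀ a c d : Fin 2, a ≠ d → c ≠ d → a = c := by decide
  have hb2 : ∀ k, b (k + 2) = b k := fun k => hfin2 _ _ _ (hbne (k + 1)) (hbne k).symm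
  set oth : Fin 2 → Fin 2 := fun c => if c = 0 then 1 else 0 with hothdef
  have hoth : ∀ k, b (k + 1) = oth (b k) := by
    intro k
    have h : ∀ a c : Fin 2, a ≠ c → a = (if c = 0 then (1 : Fin 2) else 0) := by decide
    exact h _ _ (hbne k)
  have hbeven : ∀ j, b (2 * j) = b 0 := by
    intro j; induction j with
    | zero => rfl
    | succ j ih => rw [show 2 * (j + 1) = 2 * j + 2 by ring, hb2, ih]
  have hbodd : ∀ j, b (2 * j + 1) = oth (b 0) := fun j => by rw [hoth (2 * j), hbeven j]
  -- dwell lengths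
  set m : ℕ → ℕ := fun k => t (k + 1) - t k with hmdef
  have htm : ∀ k, t (k + 1) = t k + m k := by
    intro k
    have h : t k < t (k + 1) := htmono (by omega)
    simp only [hmdef]; omega
  have hdwell' : ∀ k, τ ≤ (m k : ℝ) := fun k => hdwell k
  -- complexified solution
  set z : ℕ → Fin N → ℂ := fun u i => (x u i : ℂ) with hzdef
  have hz : ∀ u, z (u + 1) = ((A (σ u)).map Complex.ofReal).mulVec (z u) := by
    intro u; funext i
    simp only [hzdef, hx u, Matrix.mulVec, dotProduct, Matrix.map_apply]
    push_cast
    rfl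
  have hVdet : ∀ c, IsUnit (V c).det := fun c => (Matrix.isUnit_iff_isUnit_det _).mp (hVunit c)
  have hApow : ∀ c p, ((A c).map Complex.ofReal) ^ p = V c * D c ^ p * (V c)⁻¹ :=
    fun c p => BMDT.pow_decomp _ _ _ (hVunit c) (hdecomp c) p
  -- propagation within an interval
  have hintp : ∀ k p, t k + p ≤ t (k + 1) →
      z (t k + p) = (((A (b k)).map Complex.ofReal) ^ p).mulVec (z (t k)) := by
    intro k p
    induction p with
    | zero => intro _; simp [Matrix.one_mulVec]
    | succ p ih =>
      intro hle
      have hle' : t k + p ≤ t (k + 1) := by omega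
      have hσu : σ (t k + p) = b k := hσ k (t k + p) (by omega) (by omega)
      rw [show t k + (p + 1) = (t k + p) + 1 by ring, hz, hσu, ih hle',
        Matrix.mulVec_mulVec, ← pow_succ']
  have hstepz : ∀ k, z (t (k + 1)) = (V (b k) * D (b k) ^ m k * (V (b k))⁻¹).mulVec (z (t k)) := by
    intro k
    have h1 := hintp k (m k) (le_of_eq (htm k).symm)
    rw [htm k, h1, hApow]
  -- transformed coordinates
  set q : ℕ → Fin N → ℂ := fun k => ((V (b k))⁻¹).mulVec (z (t k)) with hqdef
  have hzq : ∀ k, z (t k) = (V (b k)).mulVec (q k) := by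
    intro k
    simp only [hqdef]
    rw [Matrix.mulVec_mulVec, Matrix.mul_nonsing_inv _ (hVdet _), Matrix.one_mulVec]
  have hqstep : ∀ k, q (k + 1) =
      (((V (b (k + 1)))⁻¹ * V (b k)) * (D (b k) ^ m k)).mulVec (q k) := by
    intro k
    simp only [hqdef]
    rw [hstepz k, hzq k]
    simp only [Matrix.mulVec_mulVec]
    congr 1
    simp only [Matrix.mul_assoc]
  -- diagonal facts
  have hDdiagonal : ∀ c, D c = Matrix.diagonal (fun j => D c j j) := fun c =>
    ((hDdiag c).diagonal_diag).symm
  have hDpow : ∀ c p (v : Fin N → ℂ) j, ((D c ^ p).mulVec v) j = (D c j j) ^ p * v j := by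
    intro c p v j
    conv_lhs => rw [hDdiagonal c]
    rw [Matrix.diagonal_pow, Matrix.mulVec_diagonal]
    rfl
  have hDbound : ∀ c j, ‖D c j j‖ ≤ ρ c := by
    intro c j; rw [hρ c]
    exact le_ciSup (f := fun j => ‖D c j j‖) (Finite.bddAbove_range _) j
  -- absolute value coordinates
  set av : ℕ → Fin N → ℝ := fun k i => ‖q k i‖ with havdef
  have havnn : ∀ k i, 0 ≤ av k i := fun k i => norm_nonneg _
  set Wf : Fin 2 → Matrix (Fin N) (Fin N) ℝ := fun c => BMDT.ab ((V (oth c))⁻¹ * V c) with hWfdef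
  have hWfnn : ∀ c i j, 0 ≤ Wf c i j := fun c i j => BMDT.ab_nonneg _ i j
  have hkey : ∀ k i, av (k + 1) i ≤ ρ (b k) ^ m k * (Wf (b k)).mulVec (av k) i := by
    intro k i
    have hq1 : q (k + 1) = ((V (b (k + 1)))⁻¹ * V (b k)).mulVec
        ((D (b k) ^ m k).mulVec (q k)) := by
      rw [hqstep k, ← Matrix.mulVec_mulVec]
    have h1 : av (k + 1) i ≤ (BMDT.ab ((V (b (k + 1)))⁻¹ * V (b k))).mulVec
        (fun l => ‖((D (b k) ^ m k).mulVec (q k)) l‖) i := by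
      simp only [havdef]
      rw [hq1]
      exact BMDT.abs_mulVec_le _ _ i
    have h2 : ∀ l, ‖((D (b k) ^ m k).mulVec (q k)) l‖ ≤ ρ (b k) ^ m k * av k l := by
      intro l
      rw [hDpow, norm_mul, norm_pow]
      exact mul_le_mul_of_nonneg_right
        (pow_le_pow_left₀ (norm_nonneg _) (hDbound _ l) _) (norm_nonneg _)
    have h3 : BMDT.ab ((V (b (k + 1)))⁻¹ * V (b k)) = Wf (b k) := by
      simp only [hWfdef]; rw [hoth k]
    calc av (k + 1) i
        ≤ (BMDT.ab ((V (b (k + 1)))⁻¹ * V (b k))).mulVec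
            (fun l => ‖((D (b k) ^ m k).mulVec (q k)) l‖) i := h1
      _ ≤ (BMDT.ab ((V (b (k + 1)))⁻¹ * V (b k))).mulVec
            (fun l => ρ (b k) ^ m k * av k l) i :=
          BMDT.mulVec_mono (fun i j => BMDT.ab_nonneg _ i j) h2 i
      _ = ρ (b k) ^ m k * (BMDT.ab ((V (b (k + 1)))⁻¹ * V (b k))).mulVec (av k) i :=
          BMDT.mulVec_const_mul _ _ _ i
      _ = ρ (b k) ^ m k * (Wf (b k)).mulVec (av k) i := by rw [h3]
  -- two-step contraction
  set Pm : Matrix (Fin N) (Fin N) ℝ := Wf (oth (b 0)) * Wf (b 0) with hPmdef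
  have hPmnn : ∀ i j, 0 ≤ Pm i j := by
    simp only [hPmdef]
    exact BMDT.mul_entry_nonneg (hWfnn _) (hWfnn _)
  have hPmpownn : ∀ p, ∀ i j, 0 ≤ (Pm ^ p) i j := fun p => BMDT.pow_entry_nonneg hPmnn p
  set Pscal : ℕ → ℝ := fun j => ∏ k ∈ Finset.range (2 * j), ρ (b k) ^ m k with hPsdef
  have hPsnn : ∀ j, 0 ≤ Pscal j := fun j =>
    Finset.prod_nonneg fun k _ => pow_nonneg (hρpos _).le _
  have hPsuccEq : ∀ j, Pscal (j + 1) =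
      Pscal j * (ρ (b (2 * j)) ^ m (2 * j) * ρ (b (2 * j + 1)) ^ m (2 * j + 1)) := by
    intro j
    simp only [hPsdef]
    rw [show 2 * (j + 1) = (2 * j + 1) + 1 by ring, Finset.prod_range_succ,
      Finset.prod_range_succ, mul_assoc]
  have hmain : ∀ j i, av (2 * j) i ≤ Pscal j * (Pm ^ j).mulVec (av 0) i := by
    intro j
    induction j with
    | zero =>
      intro i
      simp only [hPsdef, Nat.mul_zero, Finset.range_zero, Finset.prod_empty, pow_zero,
        Matrix.one_mulVec, one_mul, le_refl]
    | succ j ih =>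
      intro i
      have e1 : 2 * (j + 1) = (2 * j + 1) + 1 := by ring
      have c0 : (0:ℝ) ≤ ρ (b (2 * j)) ^ m (2 * j) := pow_nonneg (hρpos _).le _
      have c1 : (0:ℝ) ≤ ρ (b (2 * j + 1)) ^ m (2 * j + 1) := pow_nonneg (hρpos _).le _
      have s2 : (Wf (b (2 * j + 1))).mulVec (av (2 * j + 1)) i ≤
          ρ (b (2 * j)) ^ m (2 * j) *
            ((Wf (b (2 * j + 1))) * Wf (b (2 * j))).mulVec (av (2 * j)) i := by
        calc (Wf (b (2 * j + 1))).mulVec (av (2 * j + 1)) i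
            ≤ (Wf (b (2 * j + 1))).mulVec
                (fun l => ρ (b (2 * j)) ^ m (2 * j) * (Wf (b (2 * j))).mulVec (av (2 * j)) l) i :=
              BMDT.mulVec_mono (hWfnn _) (fun l => hkey (2 * j) l) i
          _ = ρ (b (2 * j)) ^ m (2 * j) *
                (Wf (b (2 * j + 1))).mulVec ((Wf (b (2 * j))).mulVec (av (2 * j))) i :=
              BMDT.mulVec_const_mul _ _ _ i
          _ = _ := by rw [← Matrix.mulVec_mulVec]
      have s3 : ((Wf (b (2 * j + 1))) * Wf (b (2 * j))).mulVec (av (2 * j)) i ≤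
          Pscal j * (((Wf (b (2 * j + 1))) * Wf (b (2 * j))) * Pm ^ j).mulVec (av 0) i := by
        have hWWnn : ∀ i' j', 0 ≤ ((Wf (b (2 * j + 1))) * Wf (b (2 * j))) i' j' :=
          BMDT.mul_entry_nonneg (hWfnn _) (hWfnn _)
        calc ((Wf (b (2 * j + 1))) * Wf (b (2 * j))).mulVec (av (2 * j)) i
            ≤ ((Wf (b (2 * j + 1))) * Wf (b (2 * j))).mulVec
                (fun l => Pscal j * (Pm ^ j).mulVec (av 0) l) i :=
              BMDT.mulVec_mono hWWnn (fun l => ih l) i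
          _ = Pscal j * ((Wf (b (2 * j + 1))) * Wf (b (2 * j))).mulVec
                ((Pm ^ j).mulVec (av 0)) i := BMDT.mulVec_const_mul _ _ _ i
          _ = _ := by rw [Matrix.mulVec_mulVec]
      have hWWPm : (Wf (b (2 * j + 1))) * Wf (b (2 * j)) = Pm := by
        rw [hbodd j, hbeven j]
      calc av (2 * (j + 1)) i = av ((2 * j + 1) + 1) i := by rw [e1]
        _ ≤ ρ (b (2 * j + 1)) ^ m (2 * j + 1) *
              (Wf (b (2 * j + 1))).mulVec (av (2 * j + 1)) i := hkey _ i
        _ ≤ ρ (b (2 * j + 1)) ^ m (2 * j + 1) *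
              (ρ (b (2 * j)) ^ m (2 * j) *
                ((Wf (b (2 * j + 1))) * Wf (b (2 * j))).mulVec (av (2 * j)) i) :=
            mul_le_mul_of_nonneg_left s2 c1
        _ ≤ ρ (b (2 * j + 1)) ^ m (2 * j + 1) *
              (ρ (b (2 * j)) ^ m (2 * j) *
                (Pscal j * (((Wf (b (2 * j + 1))) * Wf (b (2 * j))) * Pm ^ j).mulVec (av 0) i)) :=
            mul_le_mul_of_nonneg_left (mul_le_mul_of_nonneg_left s3 c0) c1
        _ = Pscal (j + 1) * (Pm ^ (j + 1)).mulVec (av 0) i := by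
            rw [hWWPm, ← pow_succ', hPsuccEq j]; ring
  
  -- scalar contraction facts
  have hρ01 : 0 < ρ 0 * ρ 1 := mul_pos (hρpos 0) (hρpos 1)
  have hρ01lt : ρ 0 * ρ 1 < 1 := by nlinarith [hρpos 0, hρpos 1, hSchur 0, hSchur 1]
  have hd : 0 < -Real.log (ρ 0 * ρ 1) := by
    have := Real.log_neg hρ01 hρ01lt; linarith
  set c : ℝ := (ρ 0 * ρ 1) ^ τ with hcdef
  have hc0 : 0 < c := Real.rpow_pos_of_pos hρ01 τ
  have hpowτ : ∀ cc k, ρ cc ^ m k ≤ ρ cc ^ τ := by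
    intro cc k
    rw [show (ρ cc ^ m k : ℝ) = ρ cc ^ ((m k : ℕ) : ℝ) from (Real.rpow_natCast _ _).symm]
    exact Real.rpow_le_rpow_of_exponent_ge (hρpos cc) (hSchur cc).le (hdwell' k)
  have hfin01 : ∀ a : Fin 2, a = 0 ∨ a = 1 := by decide
  have ho0 : oth 0 = 1 := by simp only [hothdef]; decide
  have ho1 : oth 1 = 0 := by simp only [hothdef]; decide
  have hpair : ∀ j, ρ (b (2 * j)) ^ m (2 * j) * ρ (b (2 * j + 1)) ^ m (2 * j + 1) ≤ c := by
    intro j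
    have hmul : ρ (b (2 * j)) ^ m (2 * j) * ρ (b (2 * j + 1)) ^ m (2 * j + 1) ≤
        ρ (b (2 * j)) ^ τ * ρ (b (2 * j + 1)) ^ τ :=
      mul_le_mul (hpowτ _ _) (hpowτ _ _) (pow_nonneg (hρpos _).le _)
        (Real.rpow_nonneg (hρpos _).le _)
    refine hmul.trans (le_of_eq ?_)
    rw [hbeven j, hbodd j, hcdef]
    rcases hfin01 (b 0) with h | h <;> rw [h]
    · rw [ho0, ← Real.mul_rpow (hρpos 0).le (hρpos 1).le]
    · rw [ho1, ← Real.mul_rpow (hρpos 1).le (hρpos 0).le, mul_comm (ρ 1) (ρ 0)]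
  have hPscal : ∀ j, Pscal j ≤ c ^ j := by
    intro j; induction j with
    | zero => simp only [hPsdef, Nat.mul_zero, Finset.range_zero, Finset.prod_empty, pow_zero,
        le_refl]
    | succ j ih =>
      rw [hPsuccEq j, pow_succ]
      exact mul_le_mul ih (hpair j)
        (mul_nonneg (pow_nonneg (hρpos _).le _) (pow_nonneg (hρpos _).le _))
        (pow_nonneg hc0.le _)
  -- Gelfand bound on the alternating product matrix
  set BmR : Matrix (Fin N) (Fin N) ℝ := Wf 0 * Wf 1 with hBmRdef
  have hWf0 : Wf 0 = BMDT.ab ((V 1)⁻¹ * V 0) := by simp only [hWfdef]; rw [ho0]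
  have hWf1 : Wf 1 = BMDT.ab ((V 0)⁻¹ * V 1) := by simp only [hWfdef]; rw [ho1]
  have habs : ∀ M : Matrix (Fin N) (Fin N) ℂ, absMatrix M = (BMDT.ab M).map Complex.ofRealHom := by
    intro M; ext i j
    simp [absMatrix, BMDT.ab, Matrix.map_apply]
  have hBc : absMatrix ((V 1)⁻¹ * V 0) * absMatrix ((V 0)⁻¹ * V 1) =
      BmR.map Complex.ofRealHom := by
    rw [habs, habs, hBmRdef, hWf0, hWf1, Matrix.map_mul]
  have hBcpow : ∀ p, (absMatrix ((V 1)⁻¹ * V 0) * absMatrix ((V 0)⁻¹ * V 1)) ^ p =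
      (BmR ^ p).map Complex.ofRealHom := by
    intro p; rw [hBc, ← BMDT.matrix_map_pow]
  set ρB : ℝ := (spectralRadius ℂ
      (absMatrix ((V 1)⁻¹ * V 0) * absMatrix ((V 0)⁻¹ * V 1))).toReal with hρBdef
  have hρBnn : 0 ≤ ρB := ENNReal.toReal_nonneg
  have hlog : Real.log ρB < τ * (-Real.log (ρ 0 * ρ 1)) := by
    have := (div_lt_iff₀ hd).mp hτ
    linarith
  set R : ℝ := Real.exp (τ * (-Real.log (ρ 0 * ρ 1))) with hRdef
  have hRpos : 0 < R := Real.exp_pos _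
  have hρBR : ρB < R := by
    rcases eq_or_lt_of_le hρBnn with h | h
    · rw [← h]; exact hRpos
    · calc ρB = Real.exp (Real.log ρB) := (Real.exp_log h).symm
        _ < R := Real.exp_lt_exp.mpr hlog
  set r : ℝ := (ρB + R) / 2 with hrdef
  have hr1 : ρB < r := by rw [hrdef]; linarith
  have hr2 : r < R := by rw [hrdef]; linarith
  have hr0 : 0 < r := lt_of_le_of_lt hρBnn hr1
  have hcR : c * R = 1 := by
    rw [hcdef, hRdef, Real.rpow_def_of_pos hρ01, ← Real.exp_add]
    rw [show Real.log (ρ 0 * ρ 1) * τ + τ * -Real.log (ρ 0 * ρ 1) = 0 by ring, Real.exp_zero]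
  set θ : ℝ := c * r with hθdef
  have hθ0 : 0 < θ := mul_pos hc0 hr0
  have hθ1 : θ < 1 := by
    calc θ = c * r := rfl
      _ < c * R := mul_lt_mul_of_pos_left hr2 hc0
      _ = 1 := hcR
  obtain ⟨J, hJ⟩ := (Filter.eventually_atTop).mp
    (BMDT.eventually_entry_pow_le
      (absMatrix ((V 1)⁻¹ * V 0) * absMatrix ((V 0)⁻¹ * V 1)) hr1)
  have hBment : ∀ p, J ≤ p → ∀ i l, |(BmR ^ p) i l| ≤ r ^ p := by
    intro p hp i l
    have h := hJ p hp i l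
    rw [hBcpow p] at h
    simpa [Matrix.map_apply, Complex.norm_real] using h
  have hEB : ∀ p, J ≤ p → BMDT.E (BmR ^ p) ≤ (N : ℝ) ^ 2 * r ^ p := by
    intro p hp
    calc BMDT.E (BmR ^ p) ≤ ∑ _i : Fin N, ∑ _l : Fin N, r ^ p :=
        Finset.sum_le_sum fun i _ => Finset.sum_le_sum fun l _ => hBment p hp i l
      _ = (N : ℝ) ^ 2 * r ^ p := by
        simp [Finset.sum_const, Finset.card_univ]
        ring
  -- combined decay at even switching indices
  set S0 : ℝ := ∑ l, av 0 l with hS0def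
  have hS0nn : 0 ≤ S0 := Finset.sum_nonneg fun l _ => havnn 0 l
  have hX : ∀ j i, (Pm ^ j).mulVec (av 0) i ≤ BMDT.E (Pm ^ j) * S0 := by
    intro j i
    refine le_trans (le_abs_self _) ((BMDT.abs_mulVec_le_E _ _ i).trans ?_)
    refine mul_le_mul_of_nonneg_left (le_of_eq ?_) (BMDT.E_nonneg _)
    rw [hS0def]
    exact Finset.sum_congr rfl fun l _ => abs_of_nonneg (havnn 0 l)
  have hgen : ∀ j i, av (2 * j) i ≤ c ^ j * (BMDT.E (Pm ^ j) * S0) := by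
    intro j i
    refine (hmain j i).trans ?_
    refine mul_le_mul (hPscal j) (hX j i) ?_ (pow_nonneg hc0.le _)
    exact BMDT.mulVec_nonneg (hPmpownn j) (havnn 0) i
  obtain ⟨K, hK0, J2, hKb⟩ : ∃ K, 0 ≤ K ∧ ∃ J2 : ℕ, ∀ j, J2 ≤ j → ∀ i,
      av (2 * j) i ≤ K * θ ^ j := by
    rcases hfin01 (b 0) with h0 | h1
    · -- Pm = Wf 1 * Wf 0, use shift identity
      have hEWnn0 : 0 ≤ BMDT.E (Wf 0) := BMDT.E_nonneg _
      have hEWnn1 : 0 ≤ BMDT.E (Wf 1) := BMDT.E_nonneg _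
      refine ⟨BMDT.E (Wf 1) * BMDT.E (Wf 0) * (N : ℝ) ^ 2 * S0 / r, ?_, J + 1, ?_⟩
      · apply div_nonneg _ hr0.le
        apply mul_nonneg (mul_nonneg (mul_nonneg hEWnn1 hEWnn0) (by positivity)) hS0nn
      intro j hj i
      obtain ⟨p, rfl⟩ : ∃ p, j = p + 1 := ⟨j - 1, by omega⟩
      have hPmj : Pm ^ (p + 1) = Wf 1 * BmR ^ p * Wf 0 := by
        rw [hPmdef, h0, ho0, hBmRdef]
        exact BMDT.mul_pow_shift (Wf 1) (Wf 0) p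
      have hEp : BMDT.E (Pm ^ (p + 1)) ≤
          BMDT.E (Wf 1) * BMDT.E (BmR ^ p) * BMDT.E (Wf 0) := by
        rw [hPmj]
        calc BMDT.E (Wf 1 * BmR ^ p * Wf 0) ≤ BMDT.E (Wf 1 * BmR ^ p) * BMDT.E (Wf 0) :=
            BMDT.E_submul _ _
          _ ≤ BMDT.E (Wf 1) * BMDT.E (BmR ^ p) * BMDT.E (Wf 0) :=
            mul_le_mul_of_nonneg_right (BMDT.E_submul _ _) hEWnn0
      have hEp2 : BMDT.E (Pm ^ (p + 1)) ≤
          BMDT.E (Wf 1) * ((N : ℝ) ^ 2 * r ^ p) * BMDT.E (Wf 0) := by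
        refine hEp.trans ?_
        refine mul_le_mul_of_nonneg_right ?_ hEWnn0
        exact mul_le_mul_of_nonneg_left (hEB p (by omega)) hEWnn1
      calc av (2 * (p + 1)) i ≤ c ^ (p + 1) * (BMDT.E (Pm ^ (p + 1)) * S0) := hgen _ i
        _ ≤ c ^ (p + 1) * ((BMDT.E (Wf 1) * ((N : ℝ) ^ 2 * r ^ p) * BMDT.E (Wf 0)) * S0) := by
            refine mul_le_mul_of_nonneg_left
              (mul_le_mul_of_nonneg_right hEp2 hS0nn) (pow_nonneg hc0.le _)
        _ = BMDT.E (Wf 1) * BMDT.E (Wf 0) * (N : ℝ) ^ 2 * S0 / r * θ ^ (p + 1) := by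
            rw [hθdef, mul_pow]
            field_simp
            ring
    · -- Pm = BmR directly
      refine ⟨(N : ℝ) ^ 2 * S0, by positivity, J, ?_⟩
      intro j hj i
      have hPmj : Pm = BmR := by rw [hPmdef, h1, ho1, hBmRdef]
      calc av (2 * j) i ≤ c ^ j * (BMDT.E (Pm ^ j) * S0) := hgen _ i
        _ ≤ c ^ j * (((N : ℝ) ^ 2 * r ^ j) * S0) := by
            refine mul_le_mul_of_nonneg_left
              (mul_le_mul_of_nonneg_right ?_ hS0nn) (pow_nonneg hc0.le _)
            rw [hPmj]
            exact hEB j hj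
        _ = (N : ℝ) ^ 2 * S0 * θ ^ j := by
            rw [hθdef, mul_pow]; ring
  -- decay of x at even switching instants
  have hxz : ∀ u i, |x u i| = ‖z u i‖ := by
    intro u i
    simp only [hzdef, Complex.norm_real, Real.norm_eq_abs]
  set EV : ℝ := BMDT.E (BMDT.ab (V 0)) + BMDT.E (BMDT.ab (V 1)) with hEVdef
  have hEVb : ∀ cc : Fin 2, BMDT.E (BMDT.ab (V cc)) ≤ EV := by
    intro cc
    rcases hfin01 cc with h | h <;> rw [h, hEVdef]
    · nlinarith [BMDT.E_nonneg (BMDT.ab (V 1))]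
    · nlinarith [BMDT.E_nonneg (BMDT.ab (V 0))]
  have hEVnn : 0 ≤ EV := add_nonneg (BMDT.E_nonneg _) (BMDT.E_nonneg _)
  set K1 : ℝ := EV * ((N : ℝ) * K) with hK1def
  have hK1nn : 0 ≤ K1 := mul_nonneg hEVnn (mul_nonneg (Nat.cast_nonneg _) hK0)
  have hxT : ∀ j, J2 ≤ j → ∀ i, |x (t (2 * j)) i| ≤ K1 * θ ^ j := by
    intro j hj i
    rw [hxz, hzq (2 * j)]
    refine (BMDT.cplx_mulVec_E _ _ i).trans ?_
    have hsum : (∑ l, ‖q (2 * j) l‖) ≤ (N : ℝ) * (K * θ ^ j) := by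
      calc (∑ l, ‖q (2 * j) l‖) ≤ ∑ _l : Fin N, K * θ ^ j :=
          Finset.sum_le_sum fun l _ => hKb j hj l
        _ = (N : ℝ) * (K * θ ^ j) := by
          simp [Finset.sum_const, Finset.card_univ]
      
    calc BMDT.E (BMDT.ab (V (b (2 * j)))) * ∑ l, ‖q (2 * j) l‖
        ≤ EV * ((N : ℝ) * (K * θ ^ j)) :=
          mul_le_mul (hEVb _) hsum
            (Finset.sum_nonneg fun l _ => norm_nonneg _) hEVnn
      _ = K1 * θ ^ j := by rw [hK1def]; ring
  -- uniform bound inside intervals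
  have hED : ∀ cc p, BMDT.E (BMDT.ab (D cc ^ p)) ≤ (N : ℝ) := by
    intro cc p
    have hent : ∀ i j : Fin N, |BMDT.ab (D cc ^ p) i j| ≤ if i = j then 1 else 0 := by
      intro i j
      rw [abs_of_nonneg (BMDT.ab_nonneg _ i j)]
      by_cases hij : i = j
      · subst hij
        simp only [if_pos rfl]
        show ‖(D cc ^ p) i i‖ ≤ 1
        have : (D cc ^ p) i i = (D cc i i) ^ p := by
          conv_lhs => rw [hDdiagonal cc]
          rw [Matrix.diagonal_pow, Matrix.diagonal_apply_eq]
          rfl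
        rw [this, norm_pow]
        exact pow_le_one₀ (norm_nonneg _) ((hDbound cc i).trans (hSchur cc).le)
      · simp only [if_neg hij]
        show ‖(D cc ^ p) i j‖ ≤ 0
        have : (D cc ^ p) i j = 0 := by
          conv_lhs => rw [hDdiagonal cc]
          rw [Matrix.diagonal_pow, Matrix.diagonal_apply_ne _ hij]
        rw [this, norm_zero]
    calc BMDT.E (BMDT.ab (D cc ^ p))
        = ∑ i : Fin N, ∑ j : Fin N, |BMDT.ab (D cc ^ p) i j| := rfl
      _ ≤ ∑ i : Fin N, ∑ j : Fin N, if i = j then (1:ℝ) else 0 :=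
        Finset.sum_le_sum fun i _ => Finset.sum_le_sum fun j _ => hent i j
      _ = (N : ℝ) := by simp [Finset.sum_ite_eq, Finset.card_univ]

  -- mid-interval uniform bound
  set Cm : ℝ := BMDT.E (BMDT.ab (V 0)) * ((N : ℝ) * BMDT.E (BMDT.ab ((V 0)⁻¹))) +
      BMDT.E (BMDT.ab (V 1)) * ((N : ℝ) * BMDT.E (BMDT.ab ((V 1)⁻¹))) with hCmdef
  have hCmnn : 0 ≤ Cm := by
    rw [hCmdef]
    have := BMDT.E_nonneg (BMDT.ab (V 0))
    have := BMDT.E_nonneg (BMDT.ab (V 1))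
    have := BMDT.E_nonneg (BMDT.ab ((V 0)⁻¹))
    have := BMDT.E_nonneg (BMDT.ab ((V 1)⁻¹))
    positivity
  have hEtriple : ∀ cc p, BMDT.E (BMDT.ab (V cc * D cc ^ p * (V cc)⁻¹)) ≤ Cm := by
    intro cc p
    have h1 : BMDT.E (BMDT.ab (V cc * D cc ^ p * (V cc)⁻¹)) ≤
        BMDT.E (BMDT.ab (V cc)) * BMDT.E (BMDT.ab (D cc ^ p)) * BMDT.E (BMDT.ab ((V cc)⁻¹)) := by
      calc BMDT.E (BMDT.ab (V cc * D cc ^ p * (V cc)⁻¹))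
          ≤ BMDT.E (BMDT.ab (V cc * D cc ^ p)) * BMDT.E (BMDT.ab ((V cc)⁻¹)) :=
            BMDT.E_ab_mul_le _ _
        _ ≤ BMDT.E (BMDT.ab (V cc)) * BMDT.E (BMDT.ab (D cc ^ p)) * BMDT.E (BMDT.ab ((V cc)⁻¹)) :=
            mul_le_mul_of_nonneg_right (BMDT.E_ab_mul_le _ _) (BMDT.E_nonneg _)
    have h2 : BMDT.E (BMDT.ab (V cc)) * BMDT.E (BMDT.ab (D cc ^ p)) * BMDT.E (BMDT.ab ((V cc)⁻¹)) ≤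
        BMDT.E (BMDT.ab (V cc)) * ((N : ℝ) * BMDT.E (BMDT.ab ((V cc)⁻¹))) := by
      rw [← mul_assoc]
      refine mul_le_mul_of_nonneg_right ?_ (BMDT.E_nonneg _)
      exact mul_le_mul_of_nonneg_left (hED cc p) (BMDT.E_nonneg _)
    refine h1.trans (h2.trans ?_)
    rcases hfin01 cc with h | h <;> rw [h, hCmdef]
    · have h0 := BMDT.E_nonneg (BMDT.ab (V 1))
      have h1' := BMDT.E_nonneg (BMDT.ab ((V 1)⁻¹))
      have h2' : (0:ℝ) ≤ BMDT.E (BMDT.ab (V 1)) * ((N:ℝ) * BMDT.E (BMDT.ab ((V 1)⁻¹))) :=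
        mul_nonneg h0 (mul_nonneg (Nat.cast_nonneg _) h1')
      linarith
    · have h0 := BMDT.E_nonneg (BMDT.ab (V 0))
      have h1' := BMDT.E_nonneg (BMDT.ab ((V 0)⁻¹))
      have h2' : (0:ℝ) ≤ BMDT.E (BMDT.ab (V 0)) * ((N:ℝ) * BMDT.E (BMDT.ab ((V 0)⁻¹))) :=
        mul_nonneg h0 (mul_nonneg (Nat.cast_nonneg _) h1')
      linarith
  have hmid : ∀ k u, t k ≤ u → u ≤ t (k + 1) → ∀ i,
      |x u i| ≤ Cm * ∑ l, |x (t k) l| := by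
    intro k u hu1 hu2 i
    have hu3 : t k + (u - t k) ≤ t (k + 1) := by omega
    have hzu : z u = (V (b k) * D (b k) ^ (u - t k) * (V (b k))⁻¹).mulVec (z (t k)) := by
      have := hintp k (u - t k) hu3
      rw [show t k + (u - t k) = u by omega] at this
      rw [this, hApow]
    rw [hxz, hzu]
    refine (BMDT.cplx_mulVec_E _ _ i).trans ?_
    have hs : (∑ l, ‖z (t k) l‖) = ∑ l, |x (t k) l| :=
      Finset.sum_congr rfl fun l _ => (hxz (t k) l).symm
    rw [hs]
    exact mul_le_mul_of_nonneg_right (hEtriple (b k) _)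
      (Finset.sum_nonneg fun l _ => abs_nonneg _)
  -- cover u between even switching instants
  set K3 : ℝ := Cm * ((N : ℝ) * K1) + Cm * ((N : ℝ) * (Cm * ((N : ℝ) * K1))) with hK3def
  have hK3nn : 0 ≤ K3 := by
    have hN0 : (0:ℝ) ≤ (N : ℝ) := Nat.cast_nonneg _
    rw [hK3def]; positivity
  have hsum1 : ∀ j, J2 ≤ j → (∑ l, |x (t (2 * j)) l|) ≤ (N : ℝ) * (K1 * θ ^ j) := by
    intro j hj
    calc (∑ l, |x (t (2 * j)) l|) ≤ ∑ _l : Fin N, K1 * θ ^ j :=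
        Finset.sum_le_sum fun l _ => hxT j hj l
      _ = (N : ℝ) * (K1 * θ ^ j) := by simp [Finset.sum_const, Finset.card_univ]
  have hcover : ∀ j, J2 ≤ j → ∀ u, t (2 * j) ≤ u → u < t (2 * (j + 1)) → ∀ i,
      |x u i| ≤ K3 * θ ^ j := by
    intro j hj u hu1 hu2 i
    have hθjnn : (0:ℝ) ≤ θ ^ j := pow_nonneg hθ0.le _
    have hterm1 : (0:ℝ) ≤ Cm * ((N : ℝ) * K1) * θ ^ j := by
      have hN0 : (0:ℝ) ≤ (N : ℝ) := Nat.cast_nonneg _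
      positivity
    have hterm2 : (0:ℝ) ≤ Cm * ((N : ℝ) * (Cm * ((N : ℝ) * K1))) * θ ^ j := by
      have hN0 : (0:ℝ) ≤ (N : ℝ) := Nat.cast_nonneg _
      positivity
    rcases le_or_gt u (t (2 * j + 1)) with hcase | hcase
    · have h := hmid (2 * j) u hu1 hcase i
      have h2 := hsum1 j hj
      have : |x u i| ≤ Cm * ((N : ℝ) * (K1 * θ ^ j)) :=
        h.trans (mul_le_mul_of_nonneg_left h2 hCmnn)
      rw [hK3def]
      calc |x u i| ≤ Cm * ((N : ℝ) * (K1 * θ ^ j)) := this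
        _ = Cm * ((N : ℝ) * K1) * θ ^ j := by ring
        _ ≤ (Cm * ((N : ℝ) * K1) + Cm * ((N : ℝ) * (Cm * ((N : ℝ) * K1)))) * θ ^ j := by
            nlinarith
    · have hu2' : u ≤ t (2 * j + 1 + 1) := by
        have he : (2 * (j + 1)) = 2 * j + 1 + 1 := by ring
        rw [he] at hu2
        omega
      have h := hmid (2 * j + 1) u hcase.le hu2' i
      have hsum2 : (∑ l, |x (t (2 * j + 1)) l|) ≤
          (N : ℝ) * (Cm * ((N : ℝ) * (K1 * θ ^ j))) := by
        calc (∑ l, |x (t (2 * j + 1)) l|)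
            ≤ ∑ _l : Fin N, Cm * ((N : ℝ) * (K1 * θ ^ j)) := by
              refine Finset.sum_le_sum fun l _ => ?_
              have hl := hmid (2 * j) (t (2 * j + 1)) (htmono (by omega)).le (le_refl _) l
              exact hl.trans (mul_le_mul_of_nonneg_left (hsum1 j hj) hCmnn)
          _ = (N : ℝ) * (Cm * ((N : ℝ) * (K1 * θ ^ j))) := by
              simp [Finset.sum_const, Finset.card_univ]
      have : |x u i| ≤ Cm * ((N : ℝ) * (Cm * ((N : ℝ) * (K1 * θ ^ j)))) :=
        h.trans (mul_le_mul_of_nonneg_left hsum2 hCmnn)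
      rw [hK3def]
      calc |x u i| ≤ Cm * ((N : ℝ) * (Cm * ((N : ℝ) * (K1 * θ ^ j)))) := this
        _ = Cm * ((N : ℝ) * (Cm * ((N : ℝ) * K1))) * θ ^ j := by ring
        _ ≤ (Cm * ((N : ℝ) * K1) + Cm * ((N : ℝ) * (Cm * ((N : ℝ) * K1)))) * θ ^ j := by
            nlinarith
  -- conclude
  have hθj : Filter.Tendsto (fun j : ℕ => K3 * θ ^ j) Filter.atTop (nhds 0) := by
    have h := tendsto_pow_atTop_nhds_zero_of_lt_one hθ0.le hθ1
    simpa using h.const_mul K3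
  rw [NormedAddCommGroup.tendsto_nhds_zero]
  intro ε hε
  obtain ⟨J3, hJ3⟩ := (Filter.eventually_atTop).mp (hθj.eventually_lt_const hε)
  rw [Filter.eventually_atTop]
  refine ⟨t (2 * max J2 J3), fun u hu => ?_⟩
  have hle2 : ∀ n : ℕ, n ≤ t n := fun n => htmono.le_apply
  have hJ4u : max J2 J3 ≤ u := le_trans (le_trans (by omega) (hle2 (2 * max J2 J3))) hu
  obtain ⟨j, hjJ4, hPj, hju⟩ : ∃ j, max J2 J3 ≤ j ∧ t (2 * j) ≤ u ∧ u < t (2 * (j + 1)) := by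
    refine ⟨Nat.findGreatest (fun j => t (2 * j) ≤ u) u, ?_, ?_, ?_⟩
    · exact Nat.le_findGreatest hJ4u hu
    · exact Nat.findGreatest_spec (P := fun j => t (2 * j) ≤ u) hJ4u hu
    · by_contra hcon
      push_neg at hcon
      have hlej : Nat.findGreatest (fun j => t (2 * j) ≤ u) u + 1 ≤ u :=
        le_trans (le_trans (by omega)
          (hle2 (2 * (Nat.findGreatest (fun j => t (2 * j) ≤ u) u + 1)))) hcon
      exact Nat.findGreatest_is_greatest (P := fun j => t (2 * j) ≤ u)
        (Nat.lt_succ_self _) hlej hcon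
  have hb := hcover j (le_trans (le_max_left _ _) hjJ4) u hPj hju
  have hlt : K3 * θ ^ j < ε := hJ3 j (le_trans (le_max_right _ _) hjJ4)
  rw [pi_norm_lt_iff hε]
  intro i
  rw [Real.norm_eq_abs]
  exact lt_of_le_of_lt (hb i) hlt
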